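/- Bossy n-tuple consequence coincides with classical consequence: for all sets of sentences Γ ∪ {A}, Γ ⊨_{n,b} A if and only if Γ ⊨₂ A. -/

import Mathlib

/-- Helper instance so that instance search for the lexicographic order does not get stuck. -/
instance (n : ℕ) : WellFoundedLT (Fin n) := inferInstance

/-- `2^n`: the `n`-fold product of the two-element Boolean algebra `2 = {0,1}` (as `Bool`,
with `false = 0`, `true = 1`), carrying the lexicographic order. -/
abbrev Tup (n : ℕ) := Lex (Fin n → Bool)

/-- The componentwise complement `-⟨x₁,…,xₙ⟩ = ⟨1-x₁,…,1-xₙ⟩` on `2^n`. -/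
def tneg {n : ℕ} (x : Tup n) : Tup n := toLex fun i => !(ofLex x i)

/-- The top value `⟨1,…,1⟩` of `2^n`. -/
def tTop (n : ℕ) : Tup n := toLex fun _ => true

/-- The bottom value `⟨0,…,0⟩` of `2^n`. -/
def tBot (n : ℕ) : Tup n := toLex fun _ => false

/-- The three truth values `f < i < t` (i.e. `0 < 1/2 < 1`). -/
inductive V3 where
  | f | i | t
deriving DecidableEq

instance instFintypeV3 : Fintype V3 :=
  ⟨{V3.f, V3.i, V3.t}, fun x => by cases x <;> simp⟩

def V3.toFin : V3 → Fin 3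
  | .f => 0 | .i => 1 | .t => 2

instance : LinearOrder V3 := LinearOrder.lift' V3.toFin (by decide)

/-- Three-valued negation: `1 - x`. -/
def V3.negv : V3 → V3
  | .t => .f | .i => .i | .f => .t

instance (n : ℕ) : Fintype (Tup n) := Fintype.ofEquiv _ toLex
instance (n : ℕ) : Nonempty (Tup n) := ⟨tBot n⟩
noncomputable instance (n : ℕ) : CompleteLinearOrder (Tup n) :=
  Fintype.toCompleteLinearOrder _
instance : Nonempty V3 := ⟨V3.t⟩
noncomputable instance : CompleteLinearOrder V3 :=
  Fintype.toCompleteLinearOrderOfNonempty _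

/-- Terms of a first-order language: variables and constant symbols. -/
inductive Term (Const : Type) where
  | var : ℕ → Term Const
  | const : Const → Term Const

/-- First-order formulas over predicate symbols `Pred` (with arities `ar`),
constants `Const`, and the connectives `¬, ∧, ∨, ∀, ∃`. -/
inductive FForm (Pred Const : Type) (ar : Pred → ℕ) where
  | atom : (P : Pred) → (Fin (ar P) → Term Const) → FForm Pred Const ar
  | neg : FForm Pred Const ar → FForm Pred Const ar
  | conj : FForm Pred Const ar → FForm Pred Const ar → FForm Pred Const ar
  | disj : FForm Pred Const ar → FForm Pred Const ar → FForm Pred Const ar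
  | all : ℕ → FForm Pred Const ar → FForm Pred Const ar
  | ex : ℕ → FForm Pred Const ar → FForm Pred Const ar

/-- Evaluation of terms, given interpretations of the constants and an assignment. -/
def Term.evalt {Const D : Type} (cv : Const → D) (σ : ℕ → D) : Term Const → D
  | .var x => σ x
  | .const c => cv c

/-- The Clemens valuation over `2^n`: componentwise complement for `¬`, lexicographic
min/max for `∧`/`∨`, and inf/sup over the domain for the quantifiers. -/
noncomputable def fevalT {Pred Const : Type} {ar : Pred → ℕ} {n : ℕ} {D : Type}
    (cv : Const → D) (pv : (P : Pred) → (Fin (ar P) → D) → Tup n) (σ : ℕ → D) :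
    FForm Pred Const ar → Tup n
  | .atom P ts => pv P fun j => (ts j).evalt cv σ
  | .neg A => tneg (fevalT cv pv σ A)
  | .conj A B => min (fevalT cv pv σ A) (fevalT cv pv σ B)
  | .disj A B => max (fevalT cv pv σ A) (fevalT cv pv σ B)
  | .all x A => ⨅ d : D, fevalT cv pv (Function.update σ x d) A
  | .ex x A => ⨆ d : D, fevalT cv pv (Function.update σ x d) A

/-- The three-valued (strong Kleene / LP) valuation over `{0, 1/2, 1}`: `1 - x` for `¬`,
min/max for `∧`/`∨`, and inf/sup over the domain for the quantifiers. -/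
noncomputable def feval3 {Pred Const : Type} {ar : Pred → ℕ} {D : Type}
    (cv : Const → D) (pv : (P : Pred) → (Fin (ar P) → D) → V3) (σ : ℕ → D) :
    FForm Pred Const ar → V3
  | .atom P ts => pv P fun j => (ts j).evalt cv σ
  | .neg A => (feval3 cv pv σ A).negv
  | .conj A B => min (feval3 cv pv σ A) (feval3 cv pv σ B)
  | .disj A B => max (feval3 cv pv σ A) (feval3 cv pv σ B)
  | .all x A => ⨅ d : D, feval3 cv pv (Function.update σ x d) A
  | .ex x A => ⨆ d : D, feval3 cv pv (Function.update σ x d) A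

/-- Classical two-valued valuation of first-order formulas (predicates interpreted as
`Prop`-valued relations). -/
def fevalC {Pred Const : Type} {ar : Pred → ℕ} {D : Type}
    (cv : Const → D) (pv : (P : Pred) → (Fin (ar P) → D) → Prop) (σ : ℕ → D) :
    FForm Pred Const ar → Prop
  | .atom P ts => pv P fun j => (ts j).evalt cv σ
  | .neg A => ¬ fevalC cv pv σ A
  | .conj A B => fevalC cv pv σ A ∧ fevalC cv pv σ B
  | .disj A B => fevalC cv pv σ A ∨ fevalC cv pv σ B
  | .all x A => ∀ d : D, fevalC cv pv (Function.update σ x d) A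
  | .ex x A => ∃ d : D, fevalC cv pv (Function.update σ x d) A

/-- Classical first-order consequence `Γ ⊨₂ A`. -/
def Conseq2 (Pred Const : Type) (ar : Pred → ℕ)
    (Γ : Set (FForm Pred Const ar)) (A : FForm Pred Const ar) : Prop :=
  ∀ (D : Type) (_ : Nonempty D) (cv : Const → D)
    (pv : (P : Pred) → (Fin (ar P) → D) → Prop) (σ : ℕ → D),
    (∀ B ∈ Γ, fevalC cv pv σ B) → fevalC cv pv σ A

/-- Bossy consequence `Γ ⊨_{n,b} A`: preservation of "first component equals `1`". -/
def ConseqB (n : ℕ) (hn : 0 < n) (Pred Const : Type) (ar : Pred → ℕ)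
    (Γ : Set (FForm Pred Const ar)) (A : FForm Pred Const ar) : Prop :=
  ∀ (D : Type) (_ : Nonempty D) (cv : Const → D)
    (pv : (P : Pred) → (Fin (ar P) → D) → Tup n) (σ : ℕ → D),
    (∀ B ∈ Γ, ofLex (fevalT cv pv σ B) ⟨0, hn⟩ = true) →
      ofLex (fevalT cv pv σ A) ⟨0, hn⟩ = true


section Aux

variable {n : ℕ}

lemma proj_mono (hn : 0 < n) {x y : Tup n} (h : x ≤ y) :
    ofLex x ⟨0, hn⟩ ≤ ofLex y ⟨0, hn⟩ := by
  rcases eq_or_lt_of_le h with rfl | h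
  · exact le_refl _
  · obtain ⟨i, h1, h2⟩ := h
    rcases eq_or_lt_of_le (show (⟨0, hn⟩ : Fin n) ≤ i by simp [Fin.le_def]) with hi | hi
    · rw [← hi] at h2; exact le_of_lt h2
    · exact le_of_eq (h1 _ hi)

lemma bool_eq_true_of_true_le {b : Bool} (h : true ≤ b) : b = true := by
  cases b
  · exact absurd h (by decide)
  · rfl

lemma proj_min (hn : 0 < n) (x y : Tup n) :
    (ofLex (min x y) ⟨0, hn⟩ = true) ↔
      (ofLex x ⟨0, hn⟩ = true ∧ ofLex y ⟨0, hn⟩ = true) := by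
  constructor
  · intro h
    constructor
    · exact bool_eq_true_of_true_le (h ▸ proj_mono hn (min_le_left x y))
    · exact bool_eq_true_of_true_le (h ▸ proj_mono hn (min_le_right x y))
  · rintro ⟨h1, h2⟩
    rcases min_choice x y with h | h <;> rw [h]
    exacts [h1, h2]

lemma proj_max (hn : 0 < n) (x y : Tup n) :
    (ofLex (max x y) ⟨0, hn⟩ = true) ↔
      (ofLex x ⟨0, hn⟩ = true ∨ ofLex y ⟨0, hn⟩ = true) := by
  constructor
  · intro h
    rcases max_choice x y with hm | hm
    · exact Or.inl (hm ▸ h)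
    · exact Or.inr (hm ▸ h)
  · rintro (h | h)
    · exact bool_eq_true_of_true_le (h ▸ proj_mono hn (le_max_left x y))
    · exact bool_eq_true_of_true_le (h ▸ proj_mono hn (le_max_right x y))

lemma proj_iInf (hn : 0 < n) {D : Type} [Nonempty D] (f : D → Tup n) :
    (ofLex (⨅ d, f d) ⟨0, hn⟩ = true) ↔ ∀ d, ofLex (f d) ⟨0, hn⟩ = true := by
  constructor
  · intro h d
    exact bool_eq_true_of_true_le (h ▸ proj_mono hn (iInf_le f d))
  · intro h
    have hmem : sInf (Set.range f) ∈ Set.range f :=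
      @Set.Nonempty.csInf_mem _ (@CompleteLinearOrder.toConditionallyCompleteLinearOrderBot _ (Pi.Lex.instCompleteLinearOrderLexForall (ι := Fin n) (α := fun _ => Bool))).toConditionallyCompleteLinearOrder _ (Set.range_nonempty f) (Set.toFinite _)
    obtain ⟨d, hd⟩ := hmem
    show ofLex (sInf (Set.range f)) ⟨0, hn⟩ = true
    rw [← hd]
    exact h d

lemma proj_iSup (hn : 0 < n) {D : Type} [Nonempty D] (f : D → Tup n) :
    (ofLex (⨆ d, f d) ⟨0, hn⟩ = true) ↔ ∃ d, ofLex (f d) ⟨0, hn⟩ = true := by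
  constructor
  · intro h
    have hmem : sSup (Set.range f) ∈ Set.range f :=
      @Set.Nonempty.csSup_mem _ (@CompleteLinearOrder.toConditionallyCompleteLinearOrderBot _ (Pi.Lex.instCompleteLinearOrderLexForall (ι := Fin n) (α := fun _ => Bool))).toConditionallyCompleteLinearOrder _ (Set.range_nonempty f) (Set.toFinite _)
    obtain ⟨d, hd⟩ := hmem
    refine ⟨d, ?_⟩
    rw [hd]
    exact h
  · rintro ⟨d, h⟩
    exact bool_eq_true_of_true_le (h ▸ proj_mono hn (le_iSup f d))

lemma feval_first {Pred Const : Type} {ar : Pred → ℕ} (hn : 0 < n) {D : Type} [Nonempty D]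
    (cv : Const → D) (pv : (P : Pred) → (Fin (ar P) → D) → Tup n) (σ : ℕ → D)
    (B : FForm Pred Const ar) :
    (ofLex (fevalT cv pv σ B) ⟨0, hn⟩ = true) ↔
      fevalC cv (fun P v => ofLex (pv P v) ⟨0, hn⟩ = true) σ B := by
  induction B generalizing σ with
  | atom P ts => rfl
  | neg A ih =>
      show (!(ofLex (fevalT cv pv σ A) ⟨0, hn⟩)) = true ↔ _
      rw [Bool.not_eq_true', ← Bool.not_eq_true]
      exact not_congr (ih σ)
  | conj A B ihA ihB =>
      rw [fevalT, fevalC, proj_min hn]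
      exact and_congr (ihA σ) (ihB σ)
  | disj A B ihA ihB =>
      rw [fevalT, fevalC, proj_max hn]
      exact or_congr (ihA σ) (ihB σ)
  | all x A ih =>
      rw [fevalT, fevalC, proj_iInf hn]
      exact forall_congr' fun d => ih _
  | ex x A ih =>
      rw [fevalT, fevalC, proj_iSup hn]
      exact exists_congr fun d => ih _

end Aux

/-- bossy `n`-tuple consequence coincides with classical consequence. -/
theorem bossy_iff_classical (n : ℕ) (hn : 2 ≤ n) (Pred Const : Type) (ar : Pred → ℕ)
    (Γ : Set (FForm Pred Const ar)) (A : FForm Pred Const ar) :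
    ConseqB n (by omega) Pred Const ar Γ A ↔ Conseq2 Pred Const ar Γ A := by
  classical
  have hn : 0 < n := by omega
  constructor
  · intro hB D nD cv pv σ hΓ
    set pvT : (P : Pred) → (Fin (ar P) → D) → Tup n :=
      fun P v => toLex fun _ : Fin n => decide (pv P v) with hpvT
    have hpv : (fun P v => ofLex (pvT P v) ⟨0, hn⟩ = true) = pv := by
      funext P v
      exact propext (by simp [hpvT])
    have key := fun B σ => feval_first hn cv pvT σ (B := B)
    rw [hpv] at key
    exact (key A σ).mp (hB D nD cv pvT σ fun B hBΓ => (key B σ).mpr (hΓ B hBΓ))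
  · intro h2 D nD cv pv σ hΓ
    rw [feval_first hn]
    exact h2 D nD cv _ σ fun B hBΓ => (feval_first hn cv pv σ B).mp (hΓ B hBΓ)
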